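/- Let 1 ≤ j < n and let S_{j+1} be obtained from an L_j^- PTS by adding a horizontal edge configuration between aisles j and j+1. If, after deleting all vertices of degree zero, S_{j+1} has exactly two connected components and it is not the case that a_{j+1} lies in one of them and b_{j+1} in the other, then 1pass and 2pass are the only vertical edge configurations in aisle j that can be valid for S_{j+1}. -/

import Mathlib

/-- Degree parity class of a vertex: degree zero, odd degree, or even positive degree. -/
inductive DegClass : Type
  | zero : DegClass
  | odd : DegClass
  | evenPos : DegClass
deriving DecidableEq

/-- The parity class of a natural number (a degree). -/
def degClass (d : ℕ) : DegClass :=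
  if d = 0 then .zero else if d % 2 = 1 then .odd else .evenPos

/-- Names of the six vertical edge configurations. -/
inductive VCName : Type
  | onepass : VCName
  | top : VCName
  | bottom : VCName
  | gap : VCName
  | twopass : VCName
  | none : VCName
deriving DecidableEq

/-- Names of the five horizontal edge configurations. -/
inductive HCName : Type
  | h11 : HCName
  | h20 : HCName
  | h02 : HCName
  | h22 : HCName
  | h00 : HCName
deriving DecidableEq

/-- Number of copies of the back cross-aisle edge `a_j a_{j+1}` in a horizontal configuration. -/
def hcA : HCName → ℕ
  | .h11 => 1
  | .h20 => 2
  | .h02 => 0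
  | .h22 => 2
  | .h00 => 0

/-- Number of copies of the front cross-aisle edge `b_j b_{j+1}` in a horizontal configuration. -/
def hcB : HCName → ℕ
  | .h11 => 1
  | .h20 => 0
  | .h02 => 2
  | .h22 => 2
  | .h00 => 0

/-- The seven equivalence classes, as triples (parity of `a_j`, parity of `b_j`, #components). -/
def cUU1C : DegClass × DegClass × ℕ := (.odd, .odd, 1)
def c0E1C : DegClass × DegClass × ℕ := (.zero, .evenPos, 1)
def cE01C : DegClass × DegClass × ℕ := (.evenPos, .zero, 1)
def cEE1C : DegClass × DegClass × ℕ := (.evenPos, .evenPos, 1)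
def cEE2C : DegClass × DegClass × ℕ := (.evenPos, .evenPos, 2)
def c000C : DegClass × DegClass × ℕ := (.zero, .zero, 0)
def c001C : DegClass × DegClass × ℕ := (.zero, .zero, 1)

/-- A single-block parallel-aisle warehouse in the sense of Ratliff and Rosenthal:
`n ≥ 1` vertical pick aisles, two horizontal cross-aisles, `picks j` pick vertices
strictly inside aisle `j`, nonnegative edge lengths, and a depot located at some
cross-aisle vertex `a_j` (if `depotTop`) or `b_j`. -/
structure Warehouse where
  n : ℕ
  npos : 1 ≤ n
  picks : Fin n → ℕ
  vlen : (j : Fin n) → Fin (picks j + 1) → ℝ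
  hlenA : Fin (n - 1) → ℝ
  hlenB : Fin (n - 1) → ℝ
  vlen_nonneg : ∀ j i, 0 ≤ vlen j i
  hlenA_nonneg : ∀ k, 0 ≤ hlenA k
  hlenB_nonneg : ∀ k, 0 ≤ hlenB k
  depotAisle : Fin n
  depotTop : Bool

namespace Warehouse

variable (W : Warehouse)

/-- Vertices of the warehouse graph: in aisle `j`, position `0` is the back cross-aisle
vertex `a_j`, position `picks j + 1` is the front cross-aisle vertex `b_j`, and
positions `1, …, picks j` are the pick vertices of aisle `j`. -/
def V : Type := Σ j : Fin W.n, Fin (W.picks j + 2)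

instance : DecidableEq W.V :=
  inferInstanceAs (DecidableEq (Σ j : Fin W.n, Fin (W.picks j + 2)))

instance : Fintype W.V :=
  inferInstanceAs (Fintype (Σ j : Fin W.n, Fin (W.picks j + 2)))

/-- The back cross-aisle vertex `a_j`. -/
def aV (j : Fin W.n) : W.V := ⟨j, 0⟩

/-- The front cross-aisle vertex `b_j`. -/
def bV (j : Fin W.n) : W.V := ⟨j, Fin.last (W.picks j + 1)⟩

/-- The depot vertex `v₀`. -/
def depot : W.V := if W.depotTop then W.aV W.depotAisle else W.bV W.depotAisle

/-- `v` is a pick vertex, i.e. a vertex strictly inside an aisle. -/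
def IsPick (v : W.V) : Prop := 0 < v.2.val ∧ v.2.val < W.picks v.1 + 1

/-- `v` is a required vertex, i.e. a member of `P` (a pick vertex or the depot). -/
def Required (v : W.V) : Prop := W.IsPick v ∨ v = W.depot

/-- Edges of the warehouse graph: a vertical edge `⟨j, i⟩` joins positions `i` and
`i+1` of aisle `j`; horizontal edges `inr (inl k)` join `a_k a_{k+1}` and
`inr (inr k)` join `b_k b_{k+1}`. -/
def E : Type := (Σ j : Fin W.n, Fin (W.picks j + 1)) ⊕ (Fin (W.n - 1) ⊕ Fin (W.n - 1))

instance : DecidableEq W.E :=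
  inferInstanceAs (DecidableEq ((Σ j : Fin W.n, Fin (W.picks j + 1)) ⊕ (Fin (W.n - 1) ⊕ Fin (W.n - 1))))

instance : Fintype W.E :=
  inferInstanceAs (Fintype ((Σ j : Fin W.n, Fin (W.picks j + 1)) ⊕ (Fin (W.n - 1) ⊕ Fin (W.n - 1))))

/-- The left aisle of a horizontal edge index. -/
def leftAisle (k : Fin (W.n - 1)) : Fin W.n := ⟨k.val, by have := k.isLt; omega⟩

/-- The right aisle of a horizontal edge index. -/
def rightAisle (k : Fin (W.n - 1)) : Fin W.n := ⟨k.val + 1, by have := k.isLt; omega⟩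

/-- Endpoints of an edge. -/
def ends : W.E → W.V × W.V
  | .inl ⟨j, i⟩ => (⟨j, i.castSucc⟩, ⟨j, i.succ⟩)
  | .inr (.inl k) => (W.aV (W.leftAisle k), W.aV (W.rightAisle k))
  | .inr (.inr k) => (W.bV (W.leftAisle k), W.bV (W.rightAisle k))

/-- Length of an edge. -/
def elen : W.E → ℝ
  | .inl ⟨j, i⟩ => W.vlen j i
  | .inr (.inl k) => W.hlenA k
  | .inr (.inr k) => W.hlenB k

/-- A subgraph of `G` is a multiplicity function taking each edge with multiplicity at most 2. -/
def IsSub (T : W.E → ℕ) : Prop := ∀ e, T e ≤ 2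

/-- Degree of a vertex in a subgraph, counting edges with multiplicity. -/
def deg (T : W.E → ℕ) (v : W.V) : ℕ :=
  ∑ e : W.E, T e * ((if (W.ends e).1 = v then 1 else 0) + (if (W.ends e).2 = v then 1 else 0))

/-- Total length of a subgraph, counting edges with multiplicity. -/
def length (T : W.E → ℕ) : ℝ := ∑ e : W.E, (T e : ℝ) * W.elen e

/-- Source of a directed traversal step. -/
def stepSrc (s : W.E × Bool) : W.V := if s.2 then (W.ends s.1).1 else (W.ends s.1).2

/-- Destination of a directed traversal step. -/
def stepDst (s : W.E × Bool) : W.V := if s.2 then (W.ends s.1).2 else (W.ends s.1).1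

/-- A list of directed steps is a closed walk. -/
def IsClosedWalk (l : List (W.E × Bool)) : Prop :=
  l.Chain' (fun s t => W.stepDst s = W.stepSrc t) ∧
  ∀ s ∈ l.head?, ∀ t ∈ l.getLast?, W.stepDst t = W.stepSrc s

/-- `T` is a tour subgraph: every required vertex has positive degree and there is a
closed walk traversing every edge of `T`, counted with multiplicity, exactly once. -/
def IsTour (T : W.E → ℕ) : Prop :=
  W.IsSub T ∧ (∀ v, W.Required v → 0 < W.deg T v) ∧
  ∃ l : List (W.E × Bool), W.IsClosedWalk l ∧ ∀ e : W.E, (l.map Prod.fst).count e = T e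

/-- `T` is an `L` partial tour subgraph: `T` is a subgraph supported on `L` and there is a
subgraph `C` of `G − L` such that `T ∪ C` is a tour subgraph of `G`. -/
def IsPTS (L : Set W.E) (T : W.E → ℕ) : Prop :=
  W.IsSub T ∧ (∀ e ∉ L, T e = 0) ∧
  ∃ C : W.E → ℕ, W.IsSub C ∧ (∀ e ∈ L, C e = 0) ∧ W.IsTour (fun e => T e + C e)

/-- Two `L` PTSs are equivalent: any completion of one is a completion of the other. -/
def EquivPTS (L : Set W.E) (T₁ T₂ : W.E → ℕ) : Prop :=
  ∀ C : W.E → ℕ, W.IsSub C → (∀ e ∈ L, C e = 0) →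
    (W.IsTour (fun e => T₁ e + C e) ↔ W.IsTour (fun e => T₂ e + C e))

/-- The edge set containing the vertical edges of the (0-indexed) aisles `< vmax` and the
horizontal edges with (0-indexed) index `< hmax`.  Thus, in paper (1-indexed) notation,
`L_j = edgesUpTo j (j-1)`, `L_j^- = edgesUpTo (j-1) (j-1)` and `G = edgesUpTo n (n-1)`. -/
def edgesUpTo (vmax hmax : ℕ) : Set W.E := fun e =>
  match e with
  | .inl ⟨i, _⟩ => i.val < vmax
  | .inr (.inl k) => k.val < hmax
  | .inr (.inr k) => k.val < hmax

/-- The simple graph on the vertices of `G` induced by the edges of positive multiplicity. -/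
def sgraph (T : W.E → ℕ) : SimpleGraph W.V where
  Adj v w := v ≠ w ∧ ∃ e, 0 < T e ∧
    (((W.ends e).1 = v ∧ (W.ends e).2 = w) ∨ ((W.ends e).1 = w ∧ (W.ends e).2 = v))
  symm := by
    constructor
    intro v w hvw
    obtain ⟨hne, e, he, hor⟩ := hvw
    exact ⟨hne.symm, e, he, hor.symm⟩
  loopless := by constructor; intro v h; exact h.1 rfl

/-- Number of connected components of a subgraph after deleting all vertices of degree zero. -/
noncomputable def numComp (T : W.E → ℕ) : ℕ :=
  Nat.card ((W.sgraph T).induce {v : W.V | 0 < W.deg T v}).ConnectedComponent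

/-- `v` and `w` both have positive degree but lie in different connected components of `T`. -/
def SepComp (T : W.E → ℕ) (v w : W.V) : Prop :=
  0 < W.deg T v ∧ 0 < W.deg T w ∧ ¬ (W.sgraph T).Reachable v w

/-- The equivalence class of a subgraph relative to the cross-aisle vertices of aisle `j`:
the degree parities of `a_j` and `b_j` and the number of nonempty connected components. -/
noncomputable def classOf (T : W.E → ℕ) (j : Fin W.n) : DegClass × DegClass × ℕ :=
  (degClass (W.deg T (W.aV j)), degClass (W.deg T (W.bV j)), W.numComp T)

theorem exists_gapIdx (j : Fin W.n) :
    ∃ g : Fin (W.picks j + 1), ∀ i, W.vlen j i ≤ W.vlen j g := by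
  obtain ⟨g, -, hg⟩ :=
    Finset.exists_max_image (Finset.univ : Finset (Fin (W.picks j + 1))) (W.vlen j)
      ⟨0, Finset.mem_univ 0⟩
  exact ⟨g, fun i => hg i (Finset.mem_univ i)⟩

/-- The vertical edge of aisle `j` of maximum length: the edge omitted by the `gap`
configuration (which leaves the largest section of the aisle unconnected). -/
noncomputable def gapIdx (j : Fin W.n) : Fin (W.picks j + 1) := (W.exists_gapIdx j).choose

theorem gapIdx_spec (j : Fin W.n) : ∀ i, W.vlen j i ≤ W.vlen j (W.gapIdx j) :=
  (W.exists_gapIdx j).choose_spec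

/-- The multiplicity of the `i`-th vertical edge of aisle `j` in each of the six vertical
edge configurations. -/
noncomputable def vconfFun (j : Fin W.n) (c : VCName) (i : Fin (W.picks j + 1)) : ℕ :=
  match c with
  | .onepass => 1
  | .top => if i.val < W.picks j then 2 else 0
  | .bottom => if 1 ≤ i.val then 2 else 0
  | .gap => if i = W.gapIdx j then 0 else 2
  | .twopass => 2
  | .none => 0

/-- A vertical edge configuration in aisle `j`, as a subgraph of `G`. -/
noncomputable def vcSub (j : Fin W.n) (c : VCName) : W.E → ℕ := fun e =>
  match e with
  | .inl ⟨i, x⟩ =>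
      if h : i = j then W.vconfFun j c ⟨x.val, by exact h ▸ x.isLt⟩ else 0
  | .inr _ => 0

/-- A horizontal edge configuration between aisles `k` and `k+1`, as a subgraph of `G`. -/
def hcSub (k : Fin (W.n - 1)) (c : HCName) : W.E → ℕ := fun e =>
  match e with
  | .inl _ => 0
  | .inr (.inl k') => if k' = k then hcA c else 0
  | .inr (.inr k') => if k' = k then hcB c else 0

end Warehouse

section AuxWalk

open SimpleGraph

private lemma walkClosed {α : Type*} {G : SimpleGraph α} {X : Set α}
    (hX : ∀ ⦃v x : α⦄, v ∈ X → G.Adj v x → x ∈ X) :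
    ∀ {v u : α}, G.Walk v u → v ∈ X → u ∈ X
  | _, _, .nil, hv => hv
  | _, _, .cons h q, hv => walkClosed hX q (hX hv h)

private lemma walkEnd {α : Type*} {G : SimpleGraph α} :
    ∀ {v u : α}, G.Walk v u → v = u ∨ ∃ z, G.Adj z u
  | _, _, .nil => Or.inl rfl
  | v, _, .cons h q => (walkEnd q).elim (fun he => Or.inr ⟨v, he ▸ h⟩) Or.inr

private lemma walkInduce {α : Type*} {G : SimpleGraph α} {s : Set α}
    (h : ∀ ⦃v x : α⦄, G.Adj v x → v ∈ s ∧ x ∈ s) :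
    ∀ {v w : α}, G.Walk v w → ∀ (hv : v ∈ s) (hw : w ∈ s),
      (G.induce s).Reachable ⟨v, hv⟩ ⟨w, hw⟩
  | _, _, .nil, _, _ => Reachable.refl _
  | _, _, .cons hadj q, hv, hw =>
      (SimpleGraph.Adj.reachable
        (SimpleGraph.comap_adj.mpr (by exact hadj))).trans (walkInduce h q (h hadj).2 hw)

private lemma chainReach {α β : Type*} (G : SimpleGraph α) (src dst : β → α) :
    ∀ (l : List β), l.Chain' (fun s t => dst s = src t) →
      (∀ s ∈ l, G.Reachable (src s) (dst s)) →
      ∀ s ∈ l, ∀ hd ∈ l.head?, G.Reachable (src hd) (src s) := by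
  intro l
  induction l with
  | nil => intro _ _ s hs; simp at hs
  | cons a t ih =>
    intro hchain hstep s hs hd hhd
    simp only [List.head?_cons, Option.mem_def, Option.some.injEq] at hhd
    subst hhd
    rcases List.mem_cons.mp hs with rfl | hs
    · exact Reachable.refl _
    · cases t with
      | nil => simp at hs
      | cons b t' =>
        obtain ⟨hab, hchain'⟩ := List.isChain_cons_cons.mp hchain
        have h1 : G.Reachable (src a) (src b) := hab ▸ hstep a (by simp)
        exact h1.trans (ih hchain' (fun z hz => hstep z (List.mem_cons_of_mem _ hz)) s hs b
          (by simp))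

end AuxWalk

/-- For the picks strictly inside the new aisle: which picks are vertically connected
to the back cross-aisle vertex by a given configuration. -/
def connA (g : ℕ) : VCName → ℕ → Prop
  | .top, _ => True
  | .gap, p => p ≤ g
  | _, _ => False

/-- Which picks are vertically connected to the front cross-aisle vertex. -/
def connB (g : ℕ) : VCName → ℕ → Prop
  | .bottom, _ => True
  | .gap, p => g < p
  | _, _ => False

namespace Warehouse

open SimpleGraph

variable {W : Warehouse}

private lemma deg_mono {T₁ T₂ : W.E → ℕ} (h : ∀ e, T₁ e ≤ T₂ e) (v : W.V) :
    W.deg T₁ v ≤ W.deg T₂ v :=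
  Finset.sum_le_sum fun e _ => Nat.mul_le_mul_right _ (h e)

private lemma deg_pos_iff {T : W.E → ℕ} {v : W.V} :
    0 < W.deg T v ↔ ∃ e, 0 < T e ∧ ((W.ends e).1 = v ∨ (W.ends e).2 = v) := by
  constructor
  · intro hpos
    by_contra hcon
    push_neg at hcon
    have hz : W.deg T v = 0 := by
      apply Finset.sum_eq_zero
      intro e _
      rcases Nat.eq_zero_or_pos (T e) with h0 | h0
      · simp [h0]
      · have h1 := hcon e h0
        simp [h1.1, h1.2]
    omega
  · rintro ⟨e, he, hor⟩
    have hind : 0 < ((if (W.ends e).1 = v then 1 else 0) +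
        (if (W.ends e).2 = v then 1 else 0)) := by
      rcases hor with h1 | h1 <;> simp [h1]
    calc 0 < T e * ((if (W.ends e).1 = v then 1 else 0) +
          (if (W.ends e).2 = v then 1 else 0)) := Nat.mul_pos he hind
      _ ≤ W.deg T v :=
        Finset.single_le_sum (f := fun e => T e * ((if (W.ends e).1 = v then 1 else 0) +
          (if (W.ends e).2 = v then 1 else 0))) (fun i _ => Nat.zero_le _) (Finset.mem_univ e)

private lemma adj_pos {T : W.E → ℕ} {v x : W.V} (hadj : (W.sgraph T).Adj v x) :
    0 < W.deg T v ∧ 0 < W.deg T x := by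
  obtain ⟨hne, e, he, hor⟩ := hadj
  constructor <;> rw [deg_pos_iff] <;> exact ⟨e, he, by tauto⟩

private lemma reach_pos {T : W.E → ℕ} {v u : W.V} (hr : (W.sgraph T).Reachable v u) :
    v = u ∨ 0 < W.deg T u := by
  obtain ⟨p⟩ := hr
  rcases walkEnd p with h1 | ⟨z, hz⟩
  · exact Or.inl h1
  · exact Or.inr (adj_pos hz).2

private lemma tour_reach {T : W.E → ℕ} (ht : W.IsTour T) {v u : W.V}
    (hv : 0 < W.deg T v) (hu : 0 < W.deg T u) : (W.sgraph T).Reachable v u := by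
  obtain ⟨-, -, l, ⟨hchain, -⟩, hcount⟩ := ht
  have hstep : ∀ s ∈ l, (W.sgraph T).Reachable (W.stepSrc s) (W.stepDst s) := by
    intro s hs
    have hpos : 0 < T s.1 := by
      rw [← hcount]
      exact List.count_pos_iff.mpr (List.mem_map_of_mem hs)
    by_cases hvv : W.stepSrc s = W.stepDst s
    · exact hvv ▸ Reachable.refl _
    · refine Adj.reachable ⟨hvv, s.1, hpos, ?_⟩
      rcases s with ⟨e, b⟩
      cases b <;> simp [Warehouse.stepSrc, Warehouse.stepDst]
  have hvx : ∀ {z : W.V}, 0 < W.deg T z → ∃ s ∈ l, z = W.stepSrc s ∨ z = W.stepDst s := by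
    intro z hz
    obtain ⟨e, he, hor⟩ := deg_pos_iff.mp hz
    have hmem : e ∈ l.map Prod.fst := by
      rw [← List.count_pos_iff, hcount]
      exact he
    obtain ⟨s, hs, hse⟩ := List.mem_map.mp hmem
    refine ⟨s, hs, ?_⟩
    rcases s with ⟨e', b⟩
    cases hse
    cases b <;> simp [Warehouse.stepSrc, Warehouse.stepDst] <;> tauto
  obtain ⟨s, hsl, hvs⟩ := hvx hv
  obtain ⟨t, htl, hut⟩ := hvx hu
  obtain ⟨hd, hhd⟩ : ∃ hd, l.head? = some hd := by
    cases l with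
    | nil => simp at hsl
    | cons a t => exact ⟨a, rfl⟩
  have h1 := chainReach (W.sgraph T) W.stepSrc W.stepDst l hchain hstep s hsl hd hhd
  have h2 := chainReach (W.sgraph T) W.stepSrc W.stepDst l hchain hstep t htl hd hhd
  have hv1 : (W.sgraph T).Reachable v (W.stepSrc s) := by
    rcases hvs with h3 | h3
    · exact h3 ▸ Reachable.refl _
    · rw [h3]; exact (hstep s hsl).symm
  have hu1 : (W.sgraph T).Reachable u (W.stepSrc t) := by
    rcases hut with h3 | h3
    · exact h3 ▸ Reachable.refl _
    · rw [h3]; exact (hstep t htl).symm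
  exact hv1.trans (h1.symm.trans (h2.trans hu1.symm))

end Warehouse



/-- Corollary 3: if `S_{j+1}` has exactly two nonempty connected
components and it is not the case that `a_{j+1}` lies in one and `b_{j+1}` in the other,
then `1pass` and `2pass` are the only vertical configurations in aisle `j` that can be
valid for `S_{j+1}`. -/
theorem stmt7 (W : Warehouse) (j : Fin W.n) (hj : j.val + 1 < W.n)
    (T : W.E → ℕ) (hT : W.IsPTS (W.edgesUpTo j.val j.val) T)
    (h : HCName)
    (S : W.E → ℕ) (hS : S = fun e => T e + W.hcSub ⟨j.val, by omega⟩ h e)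
    (hcomp : W.numComp S = 2)
    (hsep : ¬ W.SepComp S (W.aV ⟨j.val + 1, hj⟩) (W.bV ⟨j.val + 1, hj⟩)) :
    ∀ c : VCName, c ≠ VCName.onepass → c ≠ VCName.twopass →
      ¬ W.IsPTS (W.edgesUpTo (j.val + 1) (j.val + 1)) (fun e => S e + W.vcSub j c e) := by
  intro c hc1 hc2 hPTS
  classical
  set A : W.V := W.aV ⟨j.val + 1, hj⟩ with hAdef
  set Bv : W.V := W.bV ⟨j.val + 1, hj⟩ with hBdef
  -- support of S
  have hTz := hT.2.1
  have hSvert : ∀ (i : Fin W.n) (x : Fin (W.picks i + 1)),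
      0 < S (Sum.inl ⟨i, x⟩) → i.val < j.val := by
    intro i x hpos
    by_contra hcon
    have h1 : T (Sum.inl ⟨i, x⟩) = 0 :=
      hTz _ (fun hm => absurd (show i.val < j.val from hm) hcon)
    rw [hS] at hpos
    simp [Warehouse.hcSub, h1] at hpos
  have hShor : ∀ (k : Fin (W.n - 1)),
      (0 < S (Sum.inr (Sum.inl k)) ∨ 0 < S (Sum.inr (Sum.inr k))) → k.val ≤ j.val := by
    intro k hpos
    by_contra hcon
    push_neg at hcon
    have h1 : T (Sum.inr (Sum.inl k)) = 0 :=
      hTz _ (fun hm => absurd (show k.val < j.val from hm) (by omega))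
    have h2 : T (Sum.inr (Sum.inr k)) = 0 :=
      hTz _ (fun hm => absurd (show k.val < j.val from hm) (by omega))
    have hk : k ≠ (⟨j.val, by omega⟩ : Fin (W.n - 1)) := by
      intro hk'
      have := congrArg Fin.val hk'
      simp at this
      omega
    rcases hpos with hp | hp <;> rw [hS] at hp <;>
      simp [Warehouse.hcSub, h1, h2, hk] at hp
  -- endpoint shape of S-edges
  have hSend : ∀ (e : W.E) (v : W.V), 0 < S e → ((W.ends e).1 = v ∨ (W.ends e).2 = v) →
      (v.1.val < j.val) ∨ (v.1.val ≤ j.val ∧ (v.2.val = 0 ∨ v.2.val = W.picks v.1 + 1)) ∨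
        v = A ∨ v = Bv := by
    intro e v hpos hor
    rcases e with ⟨i, x⟩ | (k | k)
    · have hi := hSvert i x hpos
      rcases hor with h1 | h1 <;> subst h1 <;> exact Or.inl hi
    · have hk := hShor k (Or.inl hpos)
      rcases hor with h1 | h1 <;> subst h1
      · exact Or.inr (Or.inl ⟨by simpa [Warehouse.ends, Warehouse.aV, Warehouse.leftAisle], Or.inl rfl⟩)
      · by_cases hkj : k.val = j.val
        · refine Or.inr (Or.inr (Or.inl ?_))
          show W.aV _ = A
          rw [hAdef]
          congr 1
          exact Fin.ext (by simp [Warehouse.rightAisle, hkj])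
        · exact Or.inr (Or.inl ⟨by simp [Warehouse.ends, Warehouse.aV, Warehouse.rightAisle]; omega,
            Or.inl rfl⟩)
    · have hk := hShor k (Or.inr hpos)
      rcases hor with h1 | h1 <;> subst h1
      · exact Or.inr (Or.inl ⟨by simpa [Warehouse.ends, Warehouse.bV, Warehouse.leftAisle], Or.inr (by simp [Warehouse.ends, Warehouse.bV, Warehouse.leftAisle])⟩)
      · by_cases hkj : k.val = j.val
        · refine Or.inr (Or.inr (Or.inr ?_))
          show W.bV _ = Bv
          rw [hBdef]
          congr 1
          exact Fin.ext (by simp [Warehouse.rightAisle, hkj])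
        · exact Or.inr (Or.inl ⟨by simp [Warehouse.ends, Warehouse.bV, Warehouse.rightAisle]; omega,
            Or.inr (by simp [Warehouse.ends, Warehouse.bV, Warehouse.rightAisle])⟩)
  have hA1 : A.1.val = j.val + 1 := rfl
  have hB1 : Bv.1.val = j.val + 1 := rfl
  -- degree-zero facts
  have hdegS_pick : ∀ v : W.V, v.1.val = j.val → 0 < v.2.val → v.2.val ≤ W.picks j →
      W.deg S v = 0 := by
    intro v h1 h2 h3
    by_contra hcon
    obtain ⟨e, he, hor⟩ := Warehouse.deg_pos_iff.mp (Nat.pos_of_ne_zero hcon)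
    have hv1 : v.1 = j := Fin.ext h1
    have hpp : W.picks v.1 = W.picks j := by rw [hv1]
    rcases hSend e v he hor with h4 | h4 | h4 | h4
    · omega
    · rcases h4.2 with h5 | h5
      · omega
      · omega
    · rw [h4] at h1; rw [hA1] at h1; omega
    · rw [h4] at h1; rw [hB1] at h1; omega
  have hdegS_high : ∀ v : W.V, j.val < v.1.val → v ≠ A → v ≠ Bv → W.deg S v = 0 := by
    intro v h1 h2 h3
    by_contra hcon
    obtain ⟨e, he, hor⟩ := Warehouse.deg_pos_iff.mp (Nat.pos_of_ne_zero hcon)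
    rcases hSend e v he hor with h4 | h4 | h4 | h4
    · omega
    · omega
    · exact h2 h4
    · exact h3 h4
  -- at most one component meets {A, Bv}
  have hAB : W.deg S A = 0 ∨ W.deg S Bv = 0 ∨ (W.sgraph S).Reachable A Bv := by
    by_contra hcon
    push_neg at hcon
    exact hsep ⟨Nat.pos_of_ne_zero hcon.1, Nat.pos_of_ne_zero hcon.2.1, hcon.2.2⟩
  -- two components: get two representatives
  have hcomp' : Nat.card ((W.sgraph S).induce {v : W.V | 0 < W.deg S v}).ConnectedComponent = 2 :=
    hcomp
  obtain ⟨x, y, hxy, -⟩ := Nat.card_eq_two_iff.mp hcomp'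
  obtain ⟨v1, rfl⟩ := x.exists_rep
  obtain ⟨v2, rfl⟩ := y.exists_rep
  have hnr : ¬ (W.sgraph S).Reachable (v1 : W.V) (v2 : W.V) := by
    intro hr
    obtain ⟨p⟩ := hr
    exact hxy (SimpleGraph.ConnectedComponent.sound
      (walkInduce (fun a b hab => ⟨(Warehouse.adj_pos hab).1, (Warehouse.adj_pos hab).2⟩)
        p v1.2 v2.2))
  have hv1d : 0 < W.deg S (v1 : W.V) := v1.2
  have hv2d : 0 < W.deg S (v2 : W.V) := v2.2
  -- select a component avoiding A and Bv
  have hkey : ∀ z1 z2 : W.V, 0 < W.deg S z1 → 0 < W.deg S z2 →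
      ¬(W.sgraph S).Reachable z1 z2 →
      ((W.sgraph S).Reachable z1 A ∨ (W.sgraph S).Reachable z1 Bv) →
      ((W.sgraph S).Reachable z2 A ∨ (W.sgraph S).Reachable z2 Bv) → False := by
    intro z1 z2 h1 h2 h12 hz1 hz2
    have hA0 : ∀ z : W.V, 0 < W.deg S z → (W.sgraph S).Reachable z A →
        W.deg S A = 0 → False := by
      intro z hz hr h0
      rcases Warehouse.reach_pos hr with h5 | h5
      · rw [h5] at hz; omega
      · omega
    have hB0 : ∀ z : W.V, 0 < W.deg S z → (W.sgraph S).Reachable z Bv →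
        W.deg S Bv = 0 → False := by
      intro z hz hr h0
      rcases Warehouse.reach_pos hr with h5 | h5
      · rw [h5] at hz; omega
      · omega
    rcases hAB with h0 | h0 | hABr
    · have hb1 := hz1.resolve_left (fun hr => hA0 _ h1 hr h0)
      have hb2 := hz2.resolve_left (fun hr => hA0 _ h2 hr h0)
      exact h12 (hb1.trans hb2.symm)
    · have hb1 := hz1.resolve_right (fun hr => hB0 _ h1 hr h0)
      have hb2 := hz2.resolve_right (fun hr => hB0 _ h2 hr h0)
      exact h12 (hb1.trans hb2.symm)
    · have ha1 : (W.sgraph S).Reachable z1 A := hz1.elim id (fun hb => hb.trans hABr.symm)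
      have ha2 : (W.sgraph S).Reachable z2 A := hz2.elim id (fun hb => hb.trans hABr.symm)
      exact h12 (ha1.trans ha2.symm)
  obtain ⟨w, u, hw, hu, hwu, hwA, hwB⟩ : ∃ w u : W.V, 0 < W.deg S w ∧ 0 < W.deg S u ∧
      ¬(W.sgraph S).Reachable w u ∧ ¬(W.sgraph S).Reachable w A ∧
      ¬(W.sgraph S).Reachable w Bv := by
    by_cases h1 : (W.sgraph S).Reachable v1 A ∨ (W.sgraph S).Reachable v1 Bv
    · refine ⟨v2, v1, hv2d, hv1d, fun hr => hnr hr.symm, ?_, ?_⟩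
      · intro hr; exact hkey v1 v2 hv1d hv2d hnr h1 (Or.inl hr)
      · intro hr; exact hkey v1 v2 hv1d hv2d hnr h1 (Or.inr hr)
    · push_neg at h1
      exact ⟨v1, v2, hv1d, hv2d, hnr, h1.1, h1.2⟩
  -- the reachable set of w, and the blocked set X
  set R : Set W.V := {v | (W.sgraph S).Reachable w v} with hRdef
  have hRpos : ∀ v ∈ R, 0 < W.deg S v := by
    intro v hv
    rcases Warehouse.reach_pos hv with h1 | h1
    · rw [← h1]; exact hw
    · exact h1
  have hRlow : ∀ v ∈ R, v.1.val ≤ j.val := by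
    intro v hv
    by_contra hcon
    have h1 : v ≠ A := fun hvA => hwA (hvA ▸ hv)
    have h2 : v ≠ Bv := fun hvB => hwB (hvB ▸ hv)
    have h3 := hdegS_high v (by omega) h1 h2
    have h4 := hRpos v hv
    omega
  obtain ⟨-, -, C, hCsub, hCzero, htour⟩ := hPTS
  set g : ℕ := (W.gapIdx j).val with hgdef
  have hgle : g ≤ W.picks j := by
    have := (W.gapIdx j).isLt
    omega
  set X : Set W.V := {v | v ∈ R ∨ (v.1.val = j.val ∧ 0 < v.2.val ∧ v.2.val ≤ W.picks j ∧
      ((W.aV j ∈ R ∧ connA g c v.2.val) ∨ (W.bV j ∈ R ∧ connB g c v.2.val)))} with hXdef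
  -- membership helpers
  have hmemA : (W.aV j ∈ X) ↔ W.aV j ∈ R := by
    constructor
    · rintro (h1 | h1)
      · exact h1
      · exact absurd h1.2.1 (by simp [Warehouse.aV])
    · exact Or.inl
  have hmemB : (W.bV j ∈ X) ↔ W.bV j ∈ R := by
    constructor
    · rintro (h1 | h1)
      · exact h1
      · exfalso
        have h2 : (W.bV j).2.val = W.picks j + 1 := by simp [Warehouse.bV]
        have h3 := h1.2.2.1
        omega
    · exact Or.inl
  have hpick_notR : ∀ p : Fin (W.picks j + 2), 0 < p.val → p.val ≤ W.picks j →
      (⟨j, p⟩ : W.V) ∉ R := by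
    intro p h1 h2 hmem
    have h3 := hRpos _ hmem
    rw [hdegS_pick ⟨j, p⟩ rfl h1 h2] at h3
    omega
  have hmemP : ∀ p : Fin (W.picks j + 2), 0 < p.val → p.val ≤ W.picks j →
      ((⟨j, p⟩ : W.V) ∈ X ↔
        ((W.aV j ∈ R ∧ connA g c p.val) ∨ (W.bV j ∈ R ∧ connB g c p.val))) := by
    intro p h1 h2
    constructor
    · rintro (h3 | h3)
      · exact absurd h3 (hpick_notR p h1 h2)
      · exact h3.2.2.2
    · intro h3
      exact Or.inr ⟨rfl, h1, h2, h3⟩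
  -- closure of X along positive vertical edges of aisle j
  have hclose : ∀ x : Fin (W.picks j + 1), 0 < W.vconfFun j c x →
      ((⟨j, x.castSucc⟩ : W.V) ∈ X ↔ (⟨j, x.succ⟩ : W.V) ∈ X) := by
    intro x hx
    have hxlt : x.val < W.picks j + 1 := x.isLt
    have hcs : (x.castSucc : Fin (W.picks j + 2)).val = x.val := rfl
    have hsc : (x.succ : Fin (W.picks j + 2)).val = x.val + 1 := rfl
    cases c with
    | onepass => exact absurd rfl hc1
    | twopass => exact absurd rfl hc2
    | none => simp [Warehouse.vconfFun] at hx
    | top =>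
      have hxp : x.val < W.picks j := by
        by_contra hcon
        simp [Warehouse.vconfFun, hcon] at hx
      have hsucc : ((⟨j, x.succ⟩ : W.V) ∈ X ↔ W.aV j ∈ R) := by
        rw [hmemP x.succ (by omega) (by omega)]
        simp [connA, connB]
      by_cases h0 : x.val = 0
      · have hcs2 : (⟨j, x.castSucc⟩ : W.V) = W.aV j :=
          congrArg (Sigma.mk j) (Fin.ext (by simp [Warehouse.aV, h0]))
        rw [hsucc, ← hmemA]
        exact Iff.of_eq (congrArg (fun v : W.V => v ∈ X) hcs2)
      · have hcast : ((⟨j, x.castSucc⟩ : W.V) ∈ X ↔ W.aV j ∈ R) := by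
          rw [hmemP x.castSucc (by omega) (by omega)]
          simp [connA, connB]
        rw [hcast, hsucc]
    | bottom =>
      have hxp : 1 ≤ x.val := by
        by_contra hcon
        simp [Warehouse.vconfFun, show ¬ (1 ≤ x.val) from hcon] at hx
      have hcast : ((⟨j, x.castSucc⟩ : W.V) ∈ X ↔ W.bV j ∈ R) := by
        rw [hmemP x.castSucc (by omega) (by omega)]
        simp [connA, connB]
      by_cases h0 : x.val = W.picks j
      · have hsc2 : (⟨j, x.succ⟩ : W.V) = W.bV j :=
          congrArg (Sigma.mk j) (Fin.ext (by simp [Warehouse.bV]; omega))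
        rw [hcast, ← hmemB]
        exact Iff.of_eq (congrArg (fun v : W.V => v ∈ X) hsc2).symm
      · have hsucc : ((⟨j, x.succ⟩ : W.V) ∈ X ↔ W.bV j ∈ R) := by
          rw [hmemP x.succ (by omega) (by omega)]
          simp [connA, connB]
        rw [hcast, hsucc]
    | gap =>
      have hne : x ≠ W.gapIdx j := by
        intro hh
        simp [Warehouse.vconfFun, hh] at hx
      have hnv : x.val ≠ g := fun hh => hne (Fin.ext hh)
      rcases Nat.lt_or_ge x.val g with hlt | hge
      · -- a-side
        have hsucc : ((⟨j, x.succ⟩ : W.V) ∈ X ↔ W.aV j ∈ R) := by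
          rw [hmemP x.succ (by omega) (by omega)]
          simp [connA, connB, show x.val + 1 ≤ g from by omega,
            show ¬ g < x.val + 1 from by omega]
        by_cases h0 : x.val = 0
        · have hcs2 : (⟨j, x.castSucc⟩ : W.V) = W.aV j :=
            congrArg (Sigma.mk j) (Fin.ext (by simp [Warehouse.aV, h0]))
          rw [hsucc, ← hmemA]
          exact Iff.of_eq (congrArg (fun v : W.V => v ∈ X) hcs2)
        · have hcast : ((⟨j, x.castSucc⟩ : W.V) ∈ X ↔ W.aV j ∈ R) := by
            rw [hmemP x.castSucc (by omega) (by omega)]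
            simp [connA, connB, show x.val ≤ g from by omega,
              show ¬ g < x.val from by omega]
          rw [hcast, hsucc]
      · -- b-side : g < x.val
        have hgt : g < x.val := by omega
        have hcast : ((⟨j, x.castSucc⟩ : W.V) ∈ X ↔ W.bV j ∈ R) := by
          rw [hmemP x.castSucc (by omega) (by omega)]
          simp [connA, connB, show ¬ (x.val ≤ g) from by omega, hgt]
        by_cases h0 : x.val = W.picks j
        · have hsc2 : (⟨j, x.succ⟩ : W.V) = W.bV j :=
            congrArg (Sigma.mk j) (Fin.ext (by simp [Warehouse.bV]; omega))
          rw [hcast, ← hmemB]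
          exact Iff.of_eq (congrArg (fun v : W.V => v ∈ X) hsc2).symm
        · have hsucc : ((⟨j, x.succ⟩ : W.V) ∈ X ↔ W.bV j ∈ R) := by
            rw [hmemP x.succ (by omega) (by omega)]
            simp [connA, connB, show ¬ (x.val + 1 ≤ g) from by omega,
              show g < x.val + 1 from by omega]
          rw [hcast, hsucc]
  -- X is closed under adjacency in the completed tour
  have htour' : W.IsTour (fun e => (S e + W.vcSub j c e) + C e) := htour
  have hXlow : ∀ v ∈ X, v.1.val ≤ j.val := by
    rintro v (hv | hv)
    · exact hRlow v hv
    · omega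
  have hXclosed : ∀ ⦃v z : W.V⦄, v ∈ X →
      (W.sgraph (fun e => (S e + W.vcSub j c e) + C e)).Adj v z → z ∈ X := by
    intro v z hv hadj
    obtain ⟨hne, e, he, hor⟩ := hadj
    have he' : 0 < S e + W.vcSub j c e + C e := he
    have hcases : 0 < S e ∨ 0 < W.vcSub j c e ∨ 0 < C e := by omega
    rcases hcases with hpos | hpos | hpos
    · -- S-edge
      rcases hv with hvR | hvP
      · have hadjS : (W.sgraph S).Adj v z := ⟨hne, e, hpos, hor⟩
        exact Or.inl (hvR.trans hadjS.reachable)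
      · exfalso
        have hdpos : 0 < W.deg S v :=
          Warehouse.deg_pos_iff.mpr ⟨e, hpos, hor.elim (fun h' => Or.inl h'.1) (fun h' => Or.inr h'.2)⟩
        rw [hdegS_pick v hvP.1 hvP.2.1 hvP.2.2.1] at hdpos
        omega
    · -- vertical edge of aisle j
      rcases e with ⟨i, x⟩ | (k | k)
      · by_cases hij : i = j
        · subst hij
          have heq : W.vcSub i c (Sum.inl ⟨i, x⟩) = W.vconfFun i c ⟨x.val, x.isLt⟩ := by
            simp [Warehouse.vcSub]
          rw [heq] at hpos
          have hpos' : 0 < W.vconfFun i c x := hpos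
          have hiff := hclose x hpos'
          have hends : W.ends (Sum.inl ⟨i, x⟩) = (⟨i, x.castSucc⟩, ⟨i, x.succ⟩) := rfl
          rw [hends] at hor
          rcases hor with ⟨h1, h2⟩ | ⟨h1, h2⟩
          · subst h1; subst h2
            exact hiff.mp hv
          · subst h1; subst h2
            exact hiff.mpr hv
        · exfalso
          have heq : W.vcSub j c (Sum.inl ⟨i, x⟩) = 0 := by
            simp [Warehouse.vcSub, hij]
          rw [heq] at hpos
          omega
      · exact absurd (show (0:ℕ) < 0 from hpos) (by omega)
      · exact absurd (show (0:ℕ) < 0 from hpos) (by omega)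
    · -- C-edge : both endpoints beyond aisle j
      exfalso
      have hnotL : ¬ (e ∈ W.edgesUpTo (j.val + 1) (j.val + 1)) := by
        intro hmem
        rw [hCzero e hmem] at hpos
        omega
      have hvlow : v.1.val ≤ j.val := hXlow v hv
      rcases e with ⟨i, x⟩ | (k | k)
      · have hi : ¬ (i.val < j.val + 1) := hnotL
        rcases hor with ⟨h1, -⟩ | ⟨-, h1⟩ <;>
          · have := congrArg (fun t : W.V => t.1.val) h1
            simp [Warehouse.ends] at this
            omega
      · have hk : ¬ (k.val < j.val + 1) := hnotL
        rcases hor with ⟨h1, -⟩ | ⟨-, h1⟩ <;>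
          · have := congrArg (fun t : W.V => t.1.val) h1
            simp [Warehouse.ends, Warehouse.aV, Warehouse.leftAisle, Warehouse.rightAisle] at this
            omega
      · have hk : ¬ (k.val < j.val + 1) := hnotL
        rcases hor with ⟨h1, -⟩ | ⟨-, h1⟩ <;>
          · have := congrArg (fun t : W.V => t.1.val) h1
            simp [Warehouse.ends, Warehouse.bV, Warehouse.leftAisle, Warehouse.rightAisle] at this
            omega
  -- w lies in X, u does not, but the tour connects them
  have hwX : w ∈ X := Or.inl (SimpleGraph.Reachable.refl w)
  have huX : u ∉ X := by
    rintro (hr | hp)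
    · exact hwu hr
    · have h1 := hdegS_pick u hp.1 hp.2.1 hp.2.2.1
      omega
  have hdegw : 0 < W.deg (fun e => (S e + W.vcSub j c e) + C e) w :=
    lt_of_lt_of_le hw (Warehouse.deg_mono (fun e => by omega) w)
  have hdegu : 0 < W.deg (fun e => (S e + W.vcSub j c e) + C e) u :=
    lt_of_lt_of_le hu (Warehouse.deg_mono (fun e => by omega) u)
  obtain ⟨p⟩ := Warehouse.tour_reach htour' hdegw hdegu
  exact huX (walkClosed hXclosed p hwX)
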